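/- Relation between the Bures and quantum Hellinger distances: For all quantum states ρ, σ on ℂ^d, d_B(ρ,σ) ≤ d_H(ρ,σ) ≤ √2 · d_B(ρ,σ). -/

import Mathlib

open scoped ComplexOrder Classical

noncomputable section

namespace QHT

variable {ι : Type*} [Fintype ι] [DecidableEq ι]

/-- Trace norm of a complex matrix: `Tr[√(Aᴴ A)]`. -/
def traceNorm (A : Matrix ι ι ℂ) : ℝ :=
  (((Matrix.posSemidef_conjTranspose_mul_self A).1.eigenvectorUnitary : Matrix ι ι ℂ) *
    Matrix.diagonal (((↑) : ℝ → ℂ) ∘ Real.sqrt ∘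
      (Matrix.posSemidef_conjTranspose_mul_self A).1.eigenvalues) *
    (star ((Matrix.posSemidef_conjTranspose_mul_self A).1.eigenvectorUnitary : Matrix ι ι ℂ))).trace.re

/-- A quantum state: positive semidefinite with unit trace. -/
def IsState (ρ : Matrix ι ι ℂ) : Prop := ρ.PosSemidef ∧ ρ.trace = 1

/-- Positive semidefinite square root (junk value `0` off the PSD matrices). -/
def matSqrt (A : Matrix ι ι ℂ) : Matrix ι ι ℂ :=
  if h : A.PosSemidef then
    (h.1.eigenvectorUnitary : Matrix ι ι ℂ) *
      Matrix.diagonal (((↑) : ℝ → ℂ) ∘ Real.sqrt ∘ h.1.eigenvalues) *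
      (star (h.1.eigenvectorUnitary : Matrix ι ι ℂ))
  else 0

/-- Real power of a Hermitian matrix, applying `x ↦ x ^ s` to positive
eigenvalues and `x ↦ 0` to the remaining ones (so `A ^ 0` is the support
projection); junk value `0` off the Hermitian matrices. -/
def matRpow (A : Matrix ι ι ℂ) (s : ℝ) : Matrix ι ι ℂ :=
  if h : A.IsHermitian then
    (h.eigenvectorUnitary : Matrix ι ι ℂ) *
      Matrix.diagonal (fun i =>
        ((if 0 < h.eigenvalues i then (h.eigenvalues i) ^ s else 0 : ℝ) : ℂ)) *
      (star (h.eigenvectorUnitary : Matrix ι ι ℂ))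
  else 0

/-- Fidelity `F(ρ,σ) = ‖√ρ √σ‖₁²`. -/
def Fid (ρ σ : Matrix ι ι ℂ) : ℝ := (traceNorm (matSqrt ρ * matSqrt σ)) ^ 2

/-- Holevo fidelity `F_H(ρ,σ) = (Tr[√ρ √σ])²`. -/
def FidH (ρ σ : Matrix ι ι ℂ) : ℝ := (((matSqrt ρ * matSqrt σ).trace).re) ^ 2

/-- `Q_s(A‖B) = Tr[A^s B^{1-s}]`. -/
def Qs (s : ℝ) (A B : Matrix ι ι ℂ) : ℝ := ((matRpow A s * matRpow B (1 - s)).trace).re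

/-- `Q_min(A‖B) = min_{s ∈ [0,1]} Q_s(A‖B)`. -/
def Qmin (A B : Matrix ι ι ℂ) : ℝ :=
  sInf { x : ℝ | ∃ s ∈ Set.Icc (0 : ℝ) 1, x = Qs s A B }

/-- Bures distance. -/
def dB (ρ σ : Matrix ι ι ℂ) : ℝ := Real.sqrt (2 * (1 - Real.sqrt (Fid ρ σ)))

/-- Quantum Hellinger distance. -/
def dH (ρ σ : Matrix ι ι ℂ) : ℝ := Real.sqrt (2 * (1 - Real.sqrt (FidH ρ σ)))

/-- `n`-fold Kronecker (tensor) power of a matrix. -/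
def tensorPow {d : ℕ} (A : Matrix (Fin d) (Fin d) ℂ) (n : ℕ) :
    Matrix (Fin n → Fin d) (Fin n → Fin d) ℂ :=
  Matrix.of fun i j => ∏ k, A (i k) (j k)

/-- Optimal error probability of symmetric binary quantum hypothesis testing
with `n` copies. -/
def pErr {d : ℕ} (p : ℝ) (ρ : Matrix (Fin d) (Fin d) ℂ) (q : ℝ)
    (σ : Matrix (Fin d) (Fin d) ℂ) (n : ℕ) : ℝ :=
  sInf { x : ℝ | ∃ Λ : Matrix (Fin n → Fin d) (Fin n → Fin d) ℂ,
    Λ.PosSemidef ∧ (1 - Λ).PosSemidef ∧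
    x = p * (((1 - Λ) * tensorPow ρ n).trace).re + q * ((Λ * tensorPow σ n).trace).re }

/-- Sample complexity of symmetric binary quantum hypothesis testing. -/
def sampleComplexity {d : ℕ} (p : ℝ) (ρ : Matrix (Fin d) (Fin d) ℂ) (q : ℝ)
    (σ : Matrix (Fin d) (Fin d) ℂ) (ε : ℝ) : ℕ :=
  sInf { n : ℕ | 1 ≤ n ∧ pErr p ρ q σ n ≤ ε }

/-- Optimal type II error `β_ε(ρ‖σ)` of asymmetric hypothesis testing. -/
def betaErr (ε : ℝ) (ρ σ : Matrix ι ι ℂ) : ℝ :=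
  sInf { x : ℝ | ∃ Λ : Matrix ι ι ℂ, Λ.PosSemidef ∧ (1 - Λ).PosSemidef ∧
    (((1 - Λ) * ρ).trace).re ≤ ε ∧ x = ((Λ * σ).trace).re }

/-- Sample complexity of asymmetric binary quantum hypothesis testing. -/
def sampleComplexityAsym {d : ℕ} (ρ σ : Matrix (Fin d) (Fin d) ℂ) (ε δ : ℝ) : ℕ :=
  sInf { n : ℕ | 1 ≤ n ∧ betaErr ε (tensorPow ρ n) (tensorPow σ n) ≤ δ }

/-- Petz–Rényi divergence `D_α(ρ‖σ)`. -/
def petzRenyi (α : ℝ) (ρ σ : Matrix ι ι ℂ) : ℝ :=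
  (1 / (α - 1)) * Real.log (((matRpow ρ α * matRpow σ (1 - α)).trace).re)

/-- Sandwiched Rényi divergence `D̃_α(ρ‖σ)`. -/
def sandwichedRenyi (α : ℝ) (ρ σ : Matrix ι ι ℂ) : ℝ :=
  (1 / (α - 1)) * Real.log
    (((matRpow (matRpow σ ((1 - α) / (2 * α)) * ρ * matRpow σ ((1 - α) / (2 * α))) α).trace).re)


section Aux

open Matrix Complex

variable {ι : Type*} [Fintype ι] [DecidableEq ι]

/-- Positive semidefinite square root via the spectral decomposition. -/
def _root_.Matrix.PosSemidef.sqrt {A : Matrix ι ι ℂ} (h : A.PosSemidef) : Matrix ι ι ℂ :=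
  (h.1.eigenvectorUnitary : Matrix ι ι ℂ) *
    Matrix.diagonal (((↑) : ℝ → ℂ) ∘ Real.sqrt ∘ h.1.eigenvalues) *
    (star (h.1.eigenvectorUnitary : Matrix ι ι ℂ))

lemma _root_.Matrix.PosSemidef.posSemidef_sqrt {A : Matrix ι ι ℂ} (h : A.PosSemidef) :
    h.sqrt.PosSemidef := by
  have hD : (Matrix.diagonal (((↑) : ℝ → ℂ) ∘ Real.sqrt ∘ h.1.eigenvalues)).PosSemidef := by
    refine Matrix.posSemidef_diagonal_iff.mpr fun i => ?_
    simp only [Function.comp_apply]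
    exact_mod_cast Real.sqrt_nonneg _
  have := hD.mul_mul_conjTranspose_same (h.1.eigenvectorUnitary : Matrix ι ι ℂ)
  rwa [← Matrix.star_eq_conjTranspose] at this

lemma _root_.Matrix.PosSemidef.sqrt_mul_self {A : Matrix ι ι ℂ} (h : A.PosSemidef) :
    h.sqrt * h.sqrt = A := by
  set U : Matrix ι ι ℂ := (h.1.eigenvectorUnitary : Matrix ι ι ℂ)
  have hU : star U * U = 1 := Unitary.coe_star_mul_self _
  have hs := h.1.spectral_theorem
  rw [Unitary.conjStarAlgAut_apply] at hs
  conv_rhs => rw [hs]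
  unfold Matrix.PosSemidef.sqrt
  rw [show U * Matrix.diagonal (((↑) : ℝ → ℂ) ∘ Real.sqrt ∘ h.1.eigenvalues) * star U *
      (U * Matrix.diagonal (((↑) : ℝ → ℂ) ∘ Real.sqrt ∘ h.1.eigenvalues) * star U) =
      U * (Matrix.diagonal (((↑) : ℝ → ℂ) ∘ Real.sqrt ∘ h.1.eigenvalues) * (star U * U) *
      Matrix.diagonal (((↑) : ℝ → ℂ) ∘ Real.sqrt ∘ h.1.eigenvalues)) * star U by
    simp only [Matrix.mul_assoc], hU, Matrix.mul_one, Matrix.diagonal_mul_diagonal]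
  congr 2
  congr 1
  funext i
  simp only [Function.comp_apply]
  rw [← Complex.ofReal_mul, Real.mul_self_sqrt (h.eigenvalues_nonneg i)]
  rfl

lemma conj_mul_self_re (z : ℂ) : ((starRingEnd ℂ) z * z).re = ‖z‖ ^ 2 := by
  rw [← Complex.normSq_eq_conj_mul_self, Complex.ofReal_re, Complex.normSq_eq_norm_sq]

/-- Cauchy–Schwarz for finite sums of complex numbers. -/
lemma cs_sum {κ : Type*} [Fintype κ] (f g : κ → ℂ) :
    ‖∑ k, (starRingEnd ℂ) (f k) * g k‖ ≤
      Real.sqrt (∑ k, ‖f k‖ ^ 2) * Real.sqrt (∑ k, ‖g k‖ ^ 2) := by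
  let x : EuclideanSpace ℂ κ := (WithLp.equiv 2 (κ → ℂ)).symm f
  let y : EuclideanSpace ℂ κ := (WithLp.equiv 2 (κ → ℂ)).symm g
  have h1 : inner ℂ x y = ∑ k, (starRingEnd ℂ) (f k) * g k := by
    simp [PiLp.inner_apply, x, y, RCLike.inner_apply]
    exact Finset.sum_congr rfl fun k _ => mul_comm _ _
  have h2 := norm_inner_le_norm (𝕜 := ℂ) x y
  rw [h1] at h2
  rw [EuclideanSpace.norm_eq, EuclideanSpace.norm_eq] at h2
  simpa [x, y] using h2

omit [DecidableEq ι] in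
lemma trace_conjTranspose_mul (B C : Matrix ι ι ℂ) :
    (Bᴴ * C).trace = ∑ p : ι × ι, (starRingEnd ℂ) (B p.1 p.2) * C p.1 p.2 := by
  rw [Matrix.trace, Fintype.sum_prod_type]
  simp only [Matrix.diag, Matrix.mul_apply, Matrix.conjTranspose_apply, Complex.star_def]
  rw [Finset.sum_comm]

omit [DecidableEq ι] in
lemma trace_conjTranspose_mul_self_re (B : Matrix ι ι ℂ) :
    ((Bᴴ * B).trace).re = ∑ p : ι × ι, ‖B p.1 p.2‖ ^ 2 := by
  rw [trace_conjTranspose_mul, Complex.re_sum]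
  exact Finset.sum_congr rfl fun p _ => conj_mul_self_re _

omit [DecidableEq ι] in
/-- Cauchy–Schwarz for the Frobenius inner product. -/
lemma cs_trace (B C : Matrix ι ι ℂ) :
    ‖(Bᴴ * C).trace‖ ≤
      Real.sqrt ((Bᴴ * B).trace.re) * Real.sqrt ((Cᴴ * C).trace.re) := by
  rw [trace_conjTranspose_mul, trace_conjTranspose_mul_self_re,
    trace_conjTranspose_mul_self_re]
  exact cs_sum _ _

omit [DecidableEq ι] in
/-- Cauchy–Schwarz for diagonal entries. -/
lemma cs_diag (B C : Matrix ι ι ℂ) (i : ι) :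
    ‖(Bᴴ * C) i i‖ ≤
      Real.sqrt (((Bᴴ * B) i i).re) * Real.sqrt (((Cᴴ * C) i i).re) := by
  have hB : ((Bᴴ * B) i i).re = ∑ k, ‖B k i‖ ^ 2 := by
    rw [Matrix.mul_apply, Complex.re_sum]
    exact Finset.sum_congr rfl fun k _ => conj_mul_self_re _
  have hC : ((Cᴴ * C) i i).re = ∑ k, ‖C k i‖ ^ 2 := by
    rw [Matrix.mul_apply, Complex.re_sum]
    exact Finset.sum_congr rfl fun k _ => conj_mul_self_re _
  rw [hB, hC, Matrix.mul_apply]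
  simp only [Matrix.conjTranspose_apply, Complex.star_def]
  exact cs_sum (fun k => B k i) (fun k => C k i)

lemma trace_re_nonneg {M : Matrix ι ι ℂ} (hM : M.PosSemidef) : 0 ≤ M.trace.re := by
  rw [Matrix.trace, Complex.re_sum]
  refine Finset.sum_nonneg fun i _ => ?_
  have h := hM.dotProduct_mulVec_nonneg (Pi.single i 1)
  have he : dotProduct (star (Pi.single i 1)) (M *ᵥ (Pi.single i 1)) = M i i := by
    simp [Matrix.mulVec_single, dotProduct, Pi.single_apply, apply_ite]
  rw [he] at h
  exact (Complex.le_def.mp h).1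

lemma trace_mul_re_nonneg {M N : Matrix ι ι ℂ} (hM : M.PosSemidef) (hN : N.PosSemidef) :
    0 ≤ ((M * N).trace).re := by
  have h1 : M * N = hM.sqrt * (hM.sqrt * N) := by
    rw [← Matrix.mul_assoc, hM.sqrt_mul_self]
  rw [h1, Matrix.trace_mul_comm]
  have h2 : hM.sqrt * N * hM.sqrt = hM.sqrt * N * hM.sqrtᴴ := by
    rw [hM.posSemidef_sqrt.isHermitian.eq]
  have h3 := hN.mul_mul_conjTranspose_same hM.sqrt
  rw [← h2] at h3
  rw [Matrix.mul_assoc] at h3 ⊢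
  exact trace_re_nonneg h3

lemma matSqrt_eq {A : Matrix ι ι ℂ} (h : A.PosSemidef) : matSqrt A = h.sqrt := dif_pos h

lemma matSqrt_posSemidef {A : Matrix ι ι ℂ} (h : A.PosSemidef) : (matSqrt A).PosSemidef := by
  rw [matSqrt_eq h]; exact h.posSemidef_sqrt

lemma matSqrt_mul_self {A : Matrix ι ι ℂ} (h : A.PosSemidef) : matSqrt A * matSqrt A = A := by
  rw [matSqrt_eq h]; exact h.sqrt_mul_self

lemma matSqrt_herm {A : Matrix ι ι ℂ} (h : A.PosSemidef) : (matSqrt A)ᴴ = matSqrt A :=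
  (matSqrt_posSemidef h).isHermitian.eq

lemma traceNorm_eq_sum_sqrt (A : Matrix ι ι ℂ) :
    traceNorm A =
      ∑ i, Real.sqrt ((Matrix.posSemidef_conjTranspose_mul_self A).1.eigenvalues i) := by
  have h : ((Matrix.posSemidef_conjTranspose_mul_self A).sqrt.trace) =
      ∑ i, ((Real.sqrt ((Matrix.posSemidef_conjTranspose_mul_self A).1.eigenvalues i) : ℝ) : ℂ) := by
    unfold Matrix.PosSemidef.sqrt
    rw [Matrix.trace_mul_cycle]
    rw [show (star (Matrix.posSemidef_conjTranspose_mul_self A).1.eigenvectorUnitary :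
        Matrix ι ι ℂ) * (Matrix.posSemidef_conjTranspose_mul_self A).1.eigenvectorUnitary.1 = 1
      from Unitary.coe_star_mul_self _]
    rw [Matrix.one_mul, Matrix.trace_diagonal]
    rfl
  rw [show traceNorm A = ((Matrix.posSemidef_conjTranspose_mul_self A).sqrt.trace).re from rfl, h, Complex.re_sum]
  simp

lemma traceNorm_nonneg (A : Matrix ι ι ℂ) : 0 ≤ traceNorm A := by
  rw [traceNorm_eq_sum_sqrt]
  exact Finset.sum_nonneg fun i _ => Real.sqrt_nonneg _

lemma re_trace_le_traceNorm (A : Matrix ι ι ℂ) : (A.trace).re ≤ traceNorm A := by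
  set hX := Matrix.posSemidef_conjTranspose_mul_self A with hXdef
  set V : Matrix ι ι ℂ := (hX.1.eigenvectorUnitary : Matrix ι ι ℂ) with hVdef
  have hVsV : Vᴴ * V = 1 := by
    rw [← Matrix.star_eq_conjTranspose]; exact Unitary.coe_star_mul_self _
  have hVVs : V * Vᴴ = 1 := by
    rw [← Matrix.star_eq_conjTranspose]; exact Unitary.coe_mul_star_self _
  have hdiag : Vᴴ * (Aᴴ * A) * V =
      Matrix.diagonal (fun i => ((hX.1.eigenvalues i : ℝ) : ℂ)) := by
    rw [← Matrix.star_eq_conjTranspose]; have h := hX.1.conjStarAlgAut_star_eigenvectorUnitary; rw [Unitary.conjStarAlgAut_star_apply] at h; exact h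
  have h0 : A.trace = (Vᴴ * (A * V)).trace := by
    rw [show Vᴴ * (A * V) = (Vᴴ * A) * V from by noncomm_ring, Matrix.trace_mul_comm,
      show V * (Vᴴ * A) = (V * Vᴴ) * A from by noncomm_ring, hVVs, Matrix.one_mul]
  have h1 : (A.trace).re ≤ ‖(Vᴴ * (A * V)).trace‖ := by
    rw [← h0]; exact Complex.re_le_norm _
  have h2 : ‖(Vᴴ * (A * V)).trace‖ ≤
      ∑ i, ‖(Vᴴ * (A * V)) i i‖ := by
    rw [Matrix.trace]
    exact norm_sum_le _ _
  have h3 : ∀ i, ‖(Vᴴ * (A * V)) i i‖ ≤ Real.sqrt (hX.1.eigenvalues i) := by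
    intro i
    have hd2 : (A * V)ᴴ * (A * V) =
        Matrix.diagonal (fun i => ((hX.1.eigenvalues i : ℝ) : ℂ)) := by
      rw [← hdiag, Matrix.conjTranspose_mul]
      noncomm_ring
    have := cs_diag V (A * V) i
    rw [hVsV, hd2, Matrix.one_apply_eq, Matrix.diagonal_apply_eq] at this
    simpa using this
  calc (A.trace).re ≤ ‖(Vᴴ * (A * V)).trace‖ := h1
    _ ≤ ∑ i, ‖(Vᴴ * (A * V)) i i‖ := h2
    _ ≤ ∑ i, Real.sqrt (hX.1.eigenvalues i) := Finset.sum_le_sum fun i _ => h3 i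
    _ = traceNorm A := (traceNorm_eq_sum_sqrt A).symm


attribute [local irreducible] matSqrt

set_option maxHeartbeats 1000000 in
lemma traceNorm_le_sqrt {ρ σ : Matrix ι ι ℂ} (hρ : IsState ρ) (hσ : IsState σ) :
    traceNorm (matSqrt ρ * matSqrt σ) ≤ Real.sqrt (((matSqrt ρ * matSqrt σ).trace).re) := by
  obtain ⟨hρp, hρt⟩ := hρ
  obtain ⟨hσp, hσt⟩ := hσ
  set r := matSqrt ρ with hrdef
  set s := matSqrt σ with hsdef
  have hrP : r.PosSemidef := matSqrt_posSemidef hρp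
  have hsP : s.PosSemidef := matSqrt_posSemidef hσp
  have hrr : r * r = ρ := matSqrt_mul_self hρp
  have hss : s * s = σ := matSqrt_mul_self hσp
  have hrh : rᴴ = r := matSqrt_herm hρp
  have hsh : sᴴ = s := matSqrt_herm hσp
  set q := matSqrt r with hqdef
  set w := matSqrt s with hwdef
  have hqq : q * q = r := matSqrt_mul_self hrP
  have hww : w * w = s := matSqrt_mul_self hsP
  have hqh : qᴴ = q := matSqrt_herm hrP
  have hwh : wᴴ = w := matSqrt_herm hsP
  set A := r * s with hAdef
  -- eigen data of Aᴴ * A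
  set hX := Matrix.posSemidef_conjTranspose_mul_self A with hXdef
  set dd := hX.1.eigenvalues with hddef
  have hd0 : ∀ i, 0 ≤ dd i := fun i => hX.eigenvalues_nonneg i
  set V : Matrix ι ι ℂ := (hX.1.eigenvectorUnitary : Matrix ι ι ℂ) with hVdef
  have hstarV : star V = Vᴴ := Matrix.star_eq_conjTranspose V
  have hVsV : Vᴴ * V = 1 := by
    rw [← hstarV]; exact Unitary.coe_star_mul_self _
  have hVVs : V * Vᴴ = 1 := by
    rw [← hstarV]; exact Unitary.coe_mul_star_self _
  have hdiag : Vᴴ * (Aᴴ * A) * V = Matrix.diagonal (fun i => ((dd i : ℝ) : ℂ)) := by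
    rw [← hstarV]; have h := hX.1.conjStarAlgAut_star_eigenvectorUnitary; rw [Unitary.conjStarAlgAut_star_apply] at h; exact h
  set e : ι → ℝ := fun i => if dd i = 0 then 0 else (Real.sqrt (dd i))⁻¹ with hedef
  have hed : ∀ i, e i * dd i = Real.sqrt (dd i) := by
    intro i
    by_cases h : dd i = 0
    · simp [hedef, h]
    · have hdpos : 0 < dd i := lt_of_le_of_ne (hd0 i) (Ne.symm h)
      have hs0 : Real.sqrt (dd i) ≠ 0 := ne_of_gt (Real.sqrt_pos.mpr hdpos)
      rw [hedef]
      simp only [h, if_false]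
      rw [inv_mul_eq_div, div_eq_iff hs0]
      exact (Real.mul_self_sqrt (hd0 i)).symm
  have hedC : ∀ i, ((e i : ℝ) : ℂ) * ((dd i : ℝ) : ℂ) = ((Real.sqrt (dd i) : ℝ) : ℂ) := by
    intro i; rw [← Complex.ofReal_mul, hed i]
  set E := Matrix.diagonal (fun i => ((e i : ℝ) : ℂ)) with hEdef
  have hEH : star E = E := by
    rw [hEdef]
    ext i j
    by_cases h : i = j
    · subst h
      simp [Matrix.star_apply, Matrix.diagonal_apply_eq, Complex.star_def, Complex.conj_ofReal]
    · simp [Matrix.star_apply, Matrix.diagonal_apply_ne, Matrix.diagonal_apply_ne', h, Ne.symm h]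
  set W := A * V * E * Vᴴ with hWdef
  have hWc : Wᴴ = V * (E * (Vᴴ * Aᴴ)) := by
    rw [← Matrix.star_eq_conjTranspose, hWdef]
    simp [StarMul.star_mul, star_star, hEH, Matrix.mul_assoc, ← Matrix.star_eq_conjTranspose]
  have haf : traceNorm A = ∑ i, Real.sqrt (dd i) := by
    have h := traceNorm_eq_sum_sqrt A
    rw [← hXdef, ← hddef] at h
    exact h
  have hF1 : (Wᴴ * A).trace = ((∑ i, Real.sqrt (dd i) : ℝ) : ℂ) := by
    rw [hWc, show V * (E * (Vᴴ * Aᴴ)) * A = V * (E * (Vᴴ * (Aᴴ * A))) from by try simp only [Matrix.mul_assoc],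
      Matrix.trace_mul_comm,
      show E * (Vᴴ * (Aᴴ * A)) * V = E * (Vᴴ * (Aᴴ * A) * V) from by try simp only [Matrix.mul_assoc],
      hdiag, hEdef, Matrix.diagonal_mul_diagonal, Matrix.trace_diagonal, Complex.ofReal_sum]
    exact Finset.sum_congr rfl fun i _ => hedC i
  set Q := Wᴴ * W with hQdef
  have hQPSD : Q.PosSemidef := Matrix.posSemidef_conjTranspose_mul_self W
  set P := Matrix.diagonal (fun i => if dd i = 0 then (0:ℂ) else 1) with hPdef
  have hQP : Q = V * P * Vᴴ := by
    rw [hQdef, hWc, hWdef,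
      show V * (E * (Vᴴ * Aᴴ)) * (A * V * E * Vᴴ) =
        V * (E * (Vᴴ * (Aᴴ * A) * V) * E) * Vᴴ from by try simp only [Matrix.mul_assoc],
      hdiag, hEdef, hPdef, Matrix.diagonal_mul_diagonal, Matrix.diagonal_mul_diagonal]
    have hfun : ∀ i : ι, ((e i : ℝ) : ℂ) * ((dd i : ℝ) : ℂ) * ((e i : ℝ) : ℂ)
        = (if dd i = 0 then (0:ℂ) else 1) := by
      intro i
      by_cases h : dd i = 0
      · simp [hedef, h]
      · have hdpos : 0 < dd i := lt_of_le_of_ne (hd0 i) (Ne.symm h)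
        have hs0 : Real.sqrt (dd i) ≠ 0 := ne_of_gt (Real.sqrt_pos.mpr hdpos)
        rw [hedC i, show e i = (Real.sqrt (dd i))⁻¹ from by rw [hedef]; simp [h],
          ← Complex.ofReal_mul, mul_inv_cancel₀ hs0]
        simp [h]
    simp only [hfun]
  have hPle : ((1 : Matrix ι ι ℂ) - P).PosSemidef := by
    have h1 : (1 : Matrix ι ι ℂ) - P =
        Matrix.diagonal (fun i => 1 - (if dd i = 0 then (0:ℂ) else 1)) := by
      rw [hPdef, ← Matrix.diagonal_one, Matrix.diagonal_sub]
    rw [h1]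
    refine Matrix.posSemidef_diagonal_iff.mpr fun i => ?_
    by_cases h : dd i = 0
    · simp only [h, if_true, sub_zero]
      exact zero_le_one
    · simp [h]
  have h1Q : ((1 : Matrix ι ι ℂ) - Q).PosSemidef := by
    have h := hPle.mul_mul_conjTranspose_same V
    have heq : (1 : Matrix ι ι ℂ) - Q = V * (1 - P) * Vᴴ := by
      rw [hQP, Matrix.mul_sub, Matrix.sub_mul, Matrix.mul_one, hVVs]
    rw [heq]; exact h
  -- the Hellinger trace
  set t := (A.trace).re with htdef
  have hYt : (((q * w)ᴴ * (q * w)).trace).re = t := by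
    have h : ((q * w)ᴴ * (q * w)).trace = A.trace := by
      calc ((q * w)ᴴ * (q * w)).trace = (w * (q * (q * w))).trace := by
            congr 1
            rw [Matrix.conjTranspose_mul, hqh, hwh]
            try simp only [Matrix.mul_assoc]
        _ = ((q * (q * w)) * w).trace := Matrix.trace_mul_comm _ _
        _ = A.trace := by
            congr 1
            rw [hAdef, ← hqq, ← hww]
            try simp only [Matrix.mul_assoc]
    rw [h]
  -- G := q * W * w
  have hGH : (q * W * w)ᴴ = w * (Wᴴ * q) := by
    rw [Matrix.conjTranspose_mul, Matrix.conjTranspose_mul, hqh, hwh]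
    try simp only [Matrix.mul_assoc]
  have e1 : (Wᴴ * A).trace = ((q * W * w)ᴴ * (q * w)).trace := by
    calc (Wᴴ * A).trace = ((Wᴴ * q * (q * w)) * w).trace := by
          congr 1; rw [hAdef, ← hqq, ← hww]; try simp only [Matrix.mul_assoc]
      _ = ((w * (Wᴴ * q)) * (q * w)).trace := by
          rw [Matrix.trace_mul_comm]; congr 1; try simp only [Matrix.mul_assoc]
      _ = ((q * W * w)ᴴ * (q * w)).trace := by rw [hGH]
  have e2 : ((q * W * w)ᴴ * (q * W * w)).trace = (Wᴴ * (r * (W * s))).trace := by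
    calc ((q * W * w)ᴴ * (q * W * w)).trace = ((w * (Wᴴ * q)) * (q * W * w)).trace := by
          rw [hGH]
      _ = (((Wᴴ * q) * (q * W * w)) * w).trace := by
          rw [show (w * (Wᴴ * q)) * (q * W * w) = w * ((Wᴴ * q) * (q * W * w)) from by
            try simp only [Matrix.mul_assoc], Matrix.trace_mul_comm]
      _ = (Wᴴ * (r * (W * s))).trace := by rw [← hqq, ← hww]; simp only [Matrix.mul_assoc]
  have e3 : (Wᴴ * (r * (W * s))).trace = (rᴴ * (W * (s * Wᴴ))).trace := by
    rw [Matrix.trace_mul_comm]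
    congr 1; rw [hrh]; try simp only [Matrix.mul_assoc]
  have hLh : (W * (s * Wᴴ))ᴴ = W * s * Wᴴ := by
    simp only [Matrix.conjTranspose_mul, Matrix.conjTranspose_conjTranspose, hsh]
    try simp only [Matrix.mul_assoc]
  have e4 : ((W * (s * Wᴴ))ᴴ * (W * (s * Wᴴ))).trace = ((w * Q * w) * (w * Q * w)).trace := by
    calc ((W * (s * Wᴴ))ᴴ * (W * (s * Wᴴ))).trace
        = (W * ((s * (Wᴴ * W)) * (s * Wᴴ))).trace := by rw [hLh]; try simp only [Matrix.mul_assoc]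
      _ = (((s * (Wᴴ * W)) * (s * Wᴴ)) * W).trace := Matrix.trace_mul_comm _ _
      _ = ((s * Q) * (s * Q)).trace := by simp only [hQdef, Matrix.mul_assoc]
      _ = (w * ((w * Q * w) * (w * Q))).trace := by rw [← hww]; try simp only [Matrix.mul_assoc]
      _ = (((w * Q * w) * (w * Q)) * w).trace := Matrix.trace_mul_comm _ _
      _ = ((w * Q * w) * (w * Q * w)).trace := by try simp only [Matrix.mul_assoc]
  set S := w * Q * w with hSdef
  have hSPSD : S.PosSemidef := by
    have h := hQPSD.mul_mul_conjTranspose_same w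
    rwa [hwh] at h
  have hsSP : (s - S).PosSemidef := by
    have h := h1Q.mul_mul_conjTranspose_same w
    rw [hwh] at h
    have heq : s - S = w * (1 - Q) * w := by
      rw [Matrix.mul_sub, Matrix.sub_mul, Matrix.mul_one, hww, ← hSdef]
    rw [heq]; exact h
  have e5 : ((S * S).trace).re ≤ ((S * s).trace).re := by
    have h := trace_mul_re_nonneg hSPSD hsSP
    rw [Matrix.mul_sub, Matrix.trace_sub, Complex.sub_re] at h
    linarith
  have e6 : (S * s).trace = (Q * σ).trace := by
    calc (S * s).trace = (w * (Q * (w * s))).trace := by rw [hSdef]; try simp only [Matrix.mul_assoc]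
      _ = ((Q * (w * s)) * w).trace := Matrix.trace_mul_comm _ _
      _ = (Q * σ).trace := by rw [← hss, ← hww]; try simp only [Matrix.mul_assoc]
  have e7 : ((Q * σ).trace).re ≤ 1 := by
    have h := trace_mul_re_nonneg h1Q hσp
    rw [Matrix.sub_mul, Matrix.one_mul, Matrix.trace_sub, Complex.sub_re] at h
    have hσ1 : (σ.trace).re = 1 := by rw [hσt]; simp
    linarith
  have hL1 : (((W * (s * Wᴴ))ᴴ * (W * (s * Wᴴ))).trace).re ≤ 1 := by
    rw [e4]
    refine le_trans e5 ?_
    rw [e6]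
    exact e7
  have hL0 : 0 ≤ (((W * (s * Wᴴ))ᴴ * (W * (s * Wᴴ))).trace).re :=
    trace_re_nonneg (Matrix.posSemidef_conjTranspose_mul_self _)
  have hg1 : (((q * W * w)ᴴ * (q * W * w)).trace).re ≤ 1 := by
    rw [e2, e3]
    have hcs := cs_trace r (W * (s * Wᴴ))
    have hr1 : ((rᴴ * r).trace).re = 1 := by
      rw [show rᴴ * r = ρ from by rw [hrh, hrr], hρt]; simp
    calc ((rᴴ * (W * (s * Wᴴ))).trace).re
        ≤ ‖(rᴴ * (W * (s * Wᴴ))).trace‖ := Complex.re_le_norm _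
      _ ≤ Real.sqrt (((rᴴ * r).trace).re) *
          Real.sqrt ((((W * (s * Wᴴ))ᴴ * (W * (s * Wᴴ))).trace).re) := hcs
      _ ≤ 1 * 1 := by
          rw [hr1, Real.sqrt_one, one_mul]
          rw [one_mul]
          exact Real.sqrt_le_one.mpr hL1
      _ = 1 := by norm_num
  -- final chain
  have ht0 : 0 ≤ t := by
    have htr : A.trace = (q * s * q).trace := by
      rw [show A = q * (q * s) from by rw [hAdef, ← hqq]; try simp only [Matrix.mul_assoc], Matrix.trace_mul_comm]
    have hpsd : (q * s * q).PosSemidef := by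
      have h := hsP.mul_mul_conjTranspose_same q
      rwa [hqh] at h
    rw [htdef, htr]; exact trace_re_nonneg hpsd
  have hstart : (((q * W * w)ᴴ * (q * w)).trace).re = traceNorm A := by
    rw [← e1, hF1, Complex.ofReal_re]
    exact haf.symm
  have hcs2 := cs_trace (q * W * w) (q * w)
  calc traceNorm A = (((q * W * w)ᴴ * (q * w)).trace).re := hstart.symm
    _ ≤ ‖((q * W * w)ᴴ * (q * w)).trace‖ := Complex.re_le_norm _
    _ ≤ Real.sqrt ((((q * W * w)ᴴ * (q * W * w)).trace).re) *
        Real.sqrt ((((q * w)ᴴ * (q * w)).trace).re) := hcs2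
    _ ≤ 1 * Real.sqrt t := by
        rw [hYt]
        have := Real.sqrt_le_one.mpr hg1
        exact mul_le_mul_of_nonneg_right this (Real.sqrt_nonneg _)
    _ = Real.sqrt t := one_mul _

lemma trace_matSqrt_mul_re_nonneg {ρ σ : Matrix ι ι ℂ} (hρp : ρ.PosSemidef)
    (hσp : σ.PosSemidef) : 0 ≤ (((matSqrt ρ * matSqrt σ).trace)).re :=
  trace_mul_re_nonneg (matSqrt_posSemidef hρp) (matSqrt_posSemidef hσp)

end Aux

/-- **Relation between the Bures and quantum Hellinger distances**:
`d_B(ρ,σ) ≤ d_H(ρ,σ) ≤ √2 · d_B(ρ,σ)`. -/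
theorem bures_hellinger_relation {d : ℕ} (ρ σ : Matrix (Fin d) (Fin d) ℂ)
    (hρ : IsState ρ) (hσ : IsState σ) :
    dB ρ σ ≤ dH ρ σ ∧ dH ρ σ ≤ Real.sqrt 2 * dB ρ σ := by
  set a := traceNorm (matSqrt ρ * matSqrt σ) with hadef
  set t := (((matSqrt ρ * matSqrt σ).trace)).re with htdef
  have ha0 : 0 ≤ a := traceNorm_nonneg _
  have ht0 : 0 ≤ t := trace_matSqrt_mul_re_nonneg hρ.1 hσ.1
  have hta : t ≤ a := re_trace_le_traceNorm _
  have hat : a ≤ Real.sqrt t := traceNorm_le_sqrt hρ hσ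
  have haa : a ^ 2 ≤ t := by
    have h := pow_le_pow_left₀ ha0 hat 2
    rwa [Real.sq_sqrt ht0] at h
  have ht1 : t ≤ 1 := by nlinarith
  have ha1 : a ≤ 1 := by nlinarith
  have hF : Real.sqrt (Fid ρ σ) = a := by
    show Real.sqrt (traceNorm (matSqrt ρ * matSqrt σ) ^ 2) = a
    rw [← hadef, Real.sqrt_sq ha0]
  have hFH : Real.sqrt (FidH ρ σ) = t := by
    show Real.sqrt ((((matSqrt ρ * matSqrt σ).trace)).re ^ 2) = t
    rw [← htdef, Real.sqrt_sq ht0]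
  unfold dB dH
  rw [hF, hFH]
  constructor
  · apply Real.sqrt_le_sqrt
    linarith
  · rw [← Real.sqrt_mul (by norm_num : (0:ℝ) ≤ 2)]
    apply Real.sqrt_le_sqrt
    nlinarith

end QHT

end
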